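/- arXiv:2504.20785 — 4 statements merged into one kernel-verified Lean document; each statement's English description precedes it below -/
import Mathlib

section
/- Let G be a finite 2-group generated by a₁, a₂, a₃ such that c₂₃ = [a₂,a₃] lies in G₃ (the third term of the lower central series). Then c₁₂₃ ≡ c₁₃₂ modulo G₄, where c_{ijℓ} = [[a_i,a_j],a_ℓ]. -/
/-- The commutator `[x,y] = x⁻¹y⁻¹xy`. -/
def commu {G : Type*} [Group G] (x y : G) : G := x⁻¹ * y⁻¹ * x * y

section Aux

variable {G : Type*} [Group G]

open scoped commutatorElement

lemma commu_eq (x y : G) : commu x y = ⁅x⁻¹, y⁻¹⁆ := by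
  simp [commu, commutatorElement_def]

lemma map_commu {H : Type*} [Group H] (f : G →* H) (x y : G) :
    f (commu x y) = commu (f x) (f y) := by
  simp [commu]

lemma lcs_succ' (n : ℕ) :
    (⊤ : Subgroup G).lowerCentralSeries (n + 1) = ⁅(⊤ : Subgroup G).lowerCentralSeries n, ⊤⁆ := rfl

lemma commu_mem_lcs1 (x y : G) : commu x y ∈ (⊤ : Subgroup G).lowerCentralSeries 1 := by
  rw [commu_eq, lcs_succ']
  exact Subgroup.commutator_mem_commutator (by simp) (by simp)

lemma commu_mem_lcs_succ {n : ℕ} {x : G} (hx : x ∈ (⊤ : Subgroup G).lowerCentralSeries n) (y : G) :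
    commu x y ∈ (⊤ : Subgroup G).lowerCentralSeries (n + 1) := by
  rw [commu_eq, lcs_succ']
  exact Subgroup.commutator_mem_commutator (inv_mem hx) (by simp)

lemma commu_mem_lcs_succ' {n : ℕ} (x : G) {y : G} (hy : y ∈ (⊤ : Subgroup G).lowerCentralSeries n) :
    commu x y ∈ (⊤ : Subgroup G).lowerCentralSeries (n + 1) := by
  rw [commu_eq, lcs_succ', Subgroup.commutator_comm]
  exact Subgroup.commutator_mem_commutator (by simp) (inv_mem hy)

/-- Expansion identity: `[x, yz] = [x,z]·[x,y]·[[x,y],z]`. -/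
lemma commu_mul_right (x y z : G) :
    commu x (y * z) = commu x z * commu x y * commu (commu x y) z := by
  simp only [commu]
  group

/-- `y*z = z*y*[y,z]`. -/
lemma mul_eq_mul_commu (y z : G) : y * z = z * y * commu y z := by
  simp only [commu]; group

/-- Surjective image of lower central series. -/
lemma lcs_le_map_of_surjective {H : Type*} [Group H] (f : G →* H)
    (hf : Function.Surjective f) (n : ℕ) :
    (⊤ : Subgroup H).lowerCentralSeries n ≤ ((⊤ : Subgroup G).lowerCentralSeries n).map f := by
  induction n with
  | zero =>
      rw [lowerCentralSeries_zero, lowerCentralSeries_zero,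
        Subgroup.map_top_of_surjective f hf]
  | succ n ih =>
      rw [lcs_succ', lcs_succ', Subgroup.map_commutator]
      exact Subgroup.commutator_mono ih
        (by rw [Subgroup.map_top_of_surjective f hf])

/-- The key computation in a group of class ≤ 3. -/
lemma key {Q : Type*} [Group Q] (hQ : (⊤ : Subgroup Q).lowerCentralSeries 3 = ⊥)
    (y₁ y₂ y₃ : Q) (h : commu y₂ y₃ ∈ (⊤ : Subgroup Q).lowerCentralSeries 2) :
    commu (commu y₁ y₂) y₃ = commu (commu y₁ y₃) y₂ := by
  -- every element of the third lower central series term is central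
  have hcent : ∀ c ∈ (⊤ : Subgroup Q).lowerCentralSeries 2, ∀ g : Q, c * g = g * c := by
    intro c hc g
    have : ⁅c, g⁆ ∈ (⊤ : Subgroup Q).lowerCentralSeries 3 := by
      rw [lcs_succ']
      exact Subgroup.commutator_mem_commutator hc (by simp)
    rw [hQ, Subgroup.mem_bot] at this
    exact commutatorElement_eq_one_iff_mul_comm.mp this
  set c12 := commu y₁ y₂ with hc12
  set c13 := commu y₁ y₃ with hc13
  have hc12m : c12 ∈ (⊤ : Subgroup Q).lowerCentralSeries 1 := commu_mem_lcs1 y₁ y₂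
  have hc13m : c13 ∈ (⊤ : Subgroup Q).lowerCentralSeries 1 := commu_mem_lcs1 y₁ y₃
  -- [y₂, y₃] is central
  have ht : ∀ g : Q, commu y₂ y₃ * g = g * commu y₂ y₃ := hcent _ h
  -- conjugation of y₁ by y₂y₃ equals conjugation by y₃y₂
  have hconj : commu y₁ (y₂ * y₃) = commu y₁ (y₃ * y₂) := by
    rw [mul_eq_mul_commu y₂ y₃]
    set t := commu y₂ y₃ with htd
    set b := y₃ * y₂ with hb
    show y₁⁻¹ * (b * t)⁻¹ * y₁ * (b * t) = y₁⁻¹ * b⁻¹ * y₁ * b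
    have h1 : t⁻¹ * (b⁻¹ * y₁ * b) = (b⁻¹ * y₁ * b) * t⁻¹ := by
      have := ht (b⁻¹ * y₁ * b)
      calc t⁻¹ * (b⁻¹ * y₁ * b) = t⁻¹ * (b⁻¹ * y₁ * b) * t * t⁻¹ := by group
        _ = t⁻¹ * (t * (b⁻¹ * y₁ * b)) * t⁻¹ := by rw [this]; group
        _ = (b⁻¹ * y₁ * b) * t⁻¹ := by group
    calc y₁⁻¹ * (b * t)⁻¹ * y₁ * (b * t)
        = y₁⁻¹ * (t⁻¹ * (b⁻¹ * y₁ * b)) * t := by group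
      _ = y₁⁻¹ * ((b⁻¹ * y₁ * b) * t⁻¹) * t := by rw [h1]
      _ = y₁⁻¹ * b⁻¹ * y₁ * b := by group
  -- expand both sides
  have hexp : c13 * c12 * commu c12 y₃ = c12 * c13 * commu c13 y₂ := by
    have e1 := commu_mul_right y₁ y₂ y₃
    have e2 := commu_mul_right y₁ y₃ y₂
    rw [hconj] at e1
    rw [e2] at e1
    exact e1.symm
  -- c12 and c13 commute: [c13, c12] = 1 since G'' ⊆ G₄ = 1; proved via a hom argument
  have hval : ∀ g : Q, commu g c12 ∈ (⊤ : Subgroup Q).lowerCentralSeries 2 := fun g =>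
    commu_mem_lcs_succ' g hc12m
  have hψ : ∀ g h : Q, commu (g * h) c12 = commu g c12 * commu h c12 := by
    intro g h
    have hc : commu g c12 * (c12⁻¹ * h * c12) = (c12⁻¹ * h * c12) * commu g c12 :=
      hcent _ (hval g) _
    calc commu (g * h) c12 = h⁻¹ * commu g c12 * (c12⁻¹ * h * c12) := by
          simp only [commu]; group
      _ = h⁻¹ * ((c12⁻¹ * h * c12) * commu g c12) := by rw [mul_assoc, hc]
      _ = commu h c12 * commu g c12 := by simp only [commu]; group
      _ = commu g c12 * commu h c12 := hcent _ (hval h) _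
  let ψ : Q →* Q := MonoidHom.mk' (fun g => commu g c12) hψ
  have hψ1 : ψ y₁ * ψ y₃ = ψ y₃ * ψ y₁ := hcent _ (hval y₁) _
  have he : commu c13 c12 = 1 := by
    have : commu c13 c12 = ψ (y₁⁻¹ * y₃⁻¹ * y₁ * y₃) := rfl
    rw [this, map_mul, map_mul, map_mul, map_inv, map_inv]
    rw [mul_assoc, hψ1]
    group
  have hcomm : c13 * c12 = c12 * c13 := by
    have h1 : c13⁻¹ * c12⁻¹ = c12⁻¹ * c13⁻¹ :=
      commutatorElement_eq_one_iff_mul_comm.mp (by rw [← commu_eq]; exact he)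
    have := congrArg (fun z => z⁻¹) h1
    simpa [mul_inv_rev] using this.symm
  rw [hcomm] at hexp
  exact mul_left_cancel hexp

end Aux

theorem c123_eq_c132_mod_G4 {G : Type*} [Group G] [Finite G]
    (hG : IsPGroup 2 G) (a₁ a₂ a₃ : G)
    (hgen : Subgroup.closure {a₁, a₂, a₃} = ⊤)
    (h23 : commu a₂ a₃ ∈ (⊤ : Subgroup G).lowerCentralSeries 2) :
    commu (commu a₁ a₂) a₃ * (commu (commu a₁ a₃) a₂)⁻¹ ∈ (⊤ : Subgroup G).lowerCentralSeries 3 := by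
  set L := (⊤ : Subgroup G).lowerCentralSeries 3 with hL
  let π : G →* G ⧸ L := QuotientGroup.mk' L
  have hπsurj : Function.Surjective π := QuotientGroup.mk'_surjective L
  have hQ : (⊤ : Subgroup (G ⧸ L)).lowerCentralSeries 3 = ⊥ := by
    refine le_antisymm ?_ bot_le
    refine le_trans (lcs_le_map_of_surjective π hπsurj 3) ?_
    rw [← hL]
    intro x hx
    obtain ⟨g, hg, rfl⟩ := hx
    simpa [π] using (QuotientGroup.eq_one_iff g).mpr hg
  have h23' : commu (π a₂) (π a₃) ∈ (⊤ : Subgroup (G ⧸ L)).lowerCentralSeries 2 := by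
    rw [← map_commu]
    have hm := Subgroup.mem_map_of_mem π h23
    rwa [Subgroup.map_lowerCentralSeries, Subgroup.map_top_of_surjective π hπsurj] at hm
  have hkey := key hQ (π a₁) (π a₂) (π a₃) h23'
  have : π (commu (commu a₁ a₂) a₃ * (commu (commu a₁ a₃) a₂)⁻¹) = 1 := by
    rw [map_mul, map_inv, map_commu, map_commu, map_commu, map_commu, hkey]
    group
  exact (QuotientGroup.eq_one_iff _).mp this
end

section
/- Let G be a finite 2-group with G/G₂ ≅ (Z/2)³, generated by a₁, a₂, a₃, with G₂/G₃ ≅ (Z/2)² and G₃ = ⟨c₁₂², c₁₃², G₄⟩ where c₁ⱼ = [a₁,a_j]. Then G'/G'' ≅ Z/2^m × Z/2^n for some positive integers m, n. -/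
open Subgroup
open scoped commutatorElement

lemma sq_eq_one_z22 (y : Multiplicative (ZMod 2 × ZMod 2)) : y ^ 2 = 1 := by
  have h : ∀ a : ZMod 2 × ZMod 2, 2 * a = 0 := by decide
  apply Multiplicative.toAdd.injective
  simp [toAdd_pow, nsmul_eq_mul, h]

lemma tadd_iff {α : Type*} [AddMonoid α] (z : Multiplicative α) :
    z ^ 2 = 1 ↔ Multiplicative.toAdd z + Multiplicative.toAdd z = 0 := by
  constructor
  · intro h
    have := congrArg Multiplicative.toAdd h
    simpa [toAdd_pow, two_nsmul] using this
  · intro h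
    apply Multiplicative.toAdd.injective
    simpa [toAdd_pow, two_nsmul] using h

lemma card_two_torsion_zmod (e : ℕ) (he : 0 < e) :
    Nat.card {z : Multiplicative (ZMod (2 ^ e)) // z ^ 2 = 1} = 2 := by
  haveI : NeZero (2 ^ e) := ⟨by positivity⟩
  have E : {z : Multiplicative (ZMod (2 ^ e)) // z ^ 2 = 1} ≃ {x : ZMod (2 ^ e) // x + x = 0} :=
    Multiplicative.toAdd.subtypeEquiv (fun z => by
      exact tadd_iff z)
  rw [Nat.card_congr E]
  have hset : {x : ZMod (2 ^ e) | x + x = 0} = {0, ((2 ^ (e - 1) : ℕ) : ZMod (2 ^ e))} := by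
    ext x
    simp only [Set.mem_setOf_eq, Set.mem_insert_iff, Set.mem_singleton_iff]
    constructor
    · intro hx
      have hval : ((x.val + x.val : ℕ) : ZMod (2 ^ e)) = 0 := by
        push_cast
        rw [ZMod.natCast_rightInverse x]
        exact hx
      rw [ZMod.natCast_eq_zero_iff] at hval
      have h2 : 2 ^ (e - 1) * 2 ∣ x.val * 2 := by
        rw [← pow_succ, Nat.sub_add_cancel he]
        simpa [two_mul, Nat.mul_two] using hval
      have hdvd : 2 ^ (e - 1) ∣ x.val := (Nat.mul_dvd_mul_iff_right (by norm_num)).mp h2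
      obtain ⟨c, hc⟩ := hdvd
      have hlt : x.val < 2 ^ e := x.val_lt
      have hc2 : c < 2 := by
        by_contra hcge
        push_neg at hcge
        have : 2 ^ e ≤ x.val := by
          calc 2 ^ e = 2 ^ (e - 1) * 2 := by rw [← pow_succ, Nat.sub_add_cancel he]
          _ ≤ 2 ^ (e - 1) * c := by exact Nat.mul_le_mul_left _ hcge
          _ = x.val := hc.symm
        omega
      interval_cases c
      · left
        have : x.val = 0 := by omega
        rw [← ZMod.natCast_rightInverse x, this]; simp
      · right
        rw [← ZMod.natCast_rightInverse x, hc]; simp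
    · rintro (rfl | rfl)
      · simp
      · rw [← Nat.cast_add, ← two_mul, ← pow_succ', Nat.sub_add_cancel he]
        exact ZMod.natCast_self _
  have hne : (0 : ZMod (2 ^ e)) ≠ ((2 ^ (e - 1) : ℕ) : ZMod (2 ^ e)) := by
    intro h
    rw [eq_comm, ZMod.natCast_eq_zero_iff] at h
    have := Nat.le_of_dvd (by positivity) h
    have : (2:ℕ) ^ (e - 1) < 2 ^ e := Nat.pow_lt_pow_right (by norm_num) (by omega)
    omega
  calc Nat.card {x : ZMod (2 ^ e) // x + x = 0}
      = ({0, ((2 ^ (e - 1) : ℕ) : ZMod (2 ^ e))} : Set (ZMod (2 ^ e))).ncard := by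
        rw [← Nat.card_coe_set_eq, ← hset]; rfl
    _ = 2 := Set.ncard_pair hne

section
variable {G : Type*} [Group G]

/-- squares of elements of the derived subgroup -/
private def SqSet (G : Type*) [Group G] : Set G := (fun g => g ^ 2) '' (Subgroup.lowerCentralSeries (⊤ : Subgroup G) 1 : Set G)

private lemma closure_SqSet_normal : (Subgroup.closure (SqSet G)).Normal := by
  haveI hN : (Subgroup.lowerCentralSeries (⊤ : Subgroup G) 1).Normal := Subgroup.lowerCentralSeries_normal ⊤ 1
  constructor
  intro x hx g
  have key : Subgroup.map (MulAut.conj g).toMonoidHom (Subgroup.closure (SqSet G)) ≤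
      Subgroup.closure (SqSet G) := by
    rw [MonoidHom.map_closure]
    apply Subgroup.closure_mono
    rintro _ ⟨_, ⟨y, hy, rfl⟩, rfl⟩
    exact ⟨g * y * g⁻¹, hN.conj_mem y hy g, by simp [MulAut.conj_apply]⟩
  exact key ⟨x, hx, rfl⟩

private def NN (G : Type*) [Group G] : Subgroup G :=
  ⁅Subgroup.lowerCentralSeries (⊤ : Subgroup G) 1, Subgroup.lowerCentralSeries (⊤ : Subgroup G) 1⁆ ⊔ Subgroup.closure (SqSet G)

private lemma NN_normal : (NN G).Normal := by
  haveI hN : (Subgroup.lowerCentralSeries (⊤ : Subgroup G) 1).Normal := Subgroup.lowerCentralSeries_normal ⊤ 1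
  haveI := closure_SqSet_normal (G := G)
  exact Subgroup.sup_normal _ _

private lemma step1 [Finite G] (hG : IsPGroup 2 G)
    (c d : G) (hc : c ∈ Subgroup.lowerCentralSeries (⊤ : Subgroup G) 1) (hd : d ∈ Subgroup.lowerCentralSeries (⊤ : Subgroup G) 1)
    (h3 : Subgroup.lowerCentralSeries (⊤ : Subgroup G) 2 = Subgroup.closure ({c ^ 2, d ^ 2} ∪
      (Subgroup.lowerCentralSeries (⊤ : Subgroup G) 3 : Set G))) :
    Subgroup.lowerCentralSeries (⊤ : Subgroup G) 2 ≤ NN G := by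
  haveI := NN_normal (G := G)
  haveI : Fact (Nat.Prime 2) := ⟨Nat.prime_two⟩
  haveI : Group.IsNilpotent G := hG.isNilpotent
  set π := QuotientGroup.mk' (NN G) with hπ
  have hkerπ : π.ker = NN G := QuotientGroup.ker_mk' _
  have hsq : ∀ x ∈ Subgroup.lowerCentralSeries (⊤ : Subgroup G) 1, x ^ 2 ∈ NN G := fun x hx =>
    le_sup_right (a := ⁅Subgroup.lowerCentralSeries (⊤ : Subgroup G) 1, Subgroup.lowerCentralSeries (⊤ : Subgroup G) 1⁆)
      (Subgroup.subset_closure ⟨x, hx, rfl⟩)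
  -- the images of the lower central series
  set P : ℕ → Subgroup (G ⧸ NN G) := fun k => Subgroup.map π (Subgroup.lowerCentralSeries (⊤ : Subgroup G) k) with hP
  have h23 : P 2 = P 3 := by
    apply le_antisymm
    · show Subgroup.map π (Subgroup.lowerCentralSeries (⊤ : Subgroup G) 2) ≤ P 3
      rw [h3, MonoidHom.map_closure]
      apply Subgroup.closure_le _ |>.mpr
      rintro _ ⟨x, hx, rfl⟩
      rcases hx with (rfl | rfl) | hx
      · have : π (c ^ 2) = 1 := by
          rw [← MonoidHom.mem_ker, hkerπ]; exact hsq c hc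
        rw [this]; exact Subgroup.one_mem _
      · have : π (d ^ 2) = 1 := by
          rw [← MonoidHom.mem_ker, hkerπ]; exact hsq d hd
        rw [this]; exact Subgroup.one_mem _
      · exact Subgroup.mem_map_of_mem π hx
    · exact Subgroup.map_mono (Subgroup.lowerCentralSeries_antitone ⊤ (by norm_num))
  have hstep : ∀ k, P (k + 1) = ⁅P k, ⊤⁆ := by
    intro k
    have hdef : Subgroup.lowerCentralSeries (⊤ : Subgroup G) (k + 1) = ⁅Subgroup.lowerCentralSeries (⊤ : Subgroup G) k, ⊤⁆ := rfl
    rw [hP]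
    show Subgroup.map π (Subgroup.lowerCentralSeries (⊤ : Subgroup G) (k + 1)) = _
    rw [hdef, Subgroup.map_commutator,
      Subgroup.map_top_of_surjective π (QuotientGroup.mk'_surjective _)]
  have hconst : ∀ j, P (2 + j) = P 2 := by
    intro j
    induction j with
    | zero => rfl
    | succ j ih =>
      have : P (2 + (j + 1)) = ⁅P (2 + j), ⊤⁆ := hstep (2 + j)
      rw [this, ih, ← hstep 2, h23.symm]
  obtain ⟨cl, hcl⟩ := Subgroup.nilpotent_iff_lowerCentralSeries.mp ‹Group.IsNilpotent G›
  have hPbot : P (2 + cl) = ⊥ := by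
    have : Subgroup.lowerCentralSeries (⊤ : Subgroup G) (2 + cl) ≤ Subgroup.lowerCentralSeries (⊤ : Subgroup G) cl :=
      Subgroup.lowerCentralSeries_antitone ⊤ (by omega)
    rw [hP]
    simp only []
    rw [← le_bot_iff]
    intro x hx
    obtain ⟨y, hy, rfl⟩ := hx
    have : y ∈ (⊥ : Subgroup G) := hcl ▸ this hy
    simp [Subgroup.mem_bot] at this
    simp [this]
  have : P 2 = ⊥ := by rw [← hconst cl, hPbot]
  rw [hP] at this
  simpa [Subgroup.map_eq_bot_iff, hkerπ] using this
end

section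
variable {G : Type*} [Group G]

/-- the subgroup of ↥G' generated by commutators and squares -/
private def SS (G : Type*) [Group G] : Subgroup ↥(Subgroup.lowerCentralSeries (⊤ : Subgroup G) 1) :=
  commutator ↥(Subgroup.lowerCentralSeries (⊤ : Subgroup G) 1) ⊔
    Subgroup.closure (Set.range fun x : ↥(Subgroup.lowerCentralSeries (⊤ : Subgroup G) 1) => x ^ 2)

private lemma map_SS : Subgroup.map (Subgroup.lowerCentralSeries (⊤ : Subgroup G) 1).subtype (SS G) = NN G := by
  rw [SS, NN, Subgroup.map_sup]
  congr 1
  · rw [commutator_def, Subgroup.map_commutator]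
    have htop : Subgroup.map (Subgroup.lowerCentralSeries (⊤ : Subgroup G) 1).subtype ⊤ = Subgroup.lowerCentralSeries (⊤ : Subgroup G) 1 := by
      rw [← MonoidHom.range_eq_map, Subgroup.range_subtype]
    rw [htop]
  · rw [MonoidHom.map_closure]
    congr 1
    ext y
    constructor
    · rintro ⟨_, ⟨x, rfl⟩, rfl⟩
      exact ⟨(x : G), x.2, rfl⟩
    · rintro ⟨x, hx, rfl⟩
      exact ⟨(⟨x, hx⟩ : ↥(Subgroup.lowerCentralSeries (⊤ : Subgroup G) 1)) ^ 2, ⟨⟨x, hx⟩, rfl⟩, rfl⟩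

private lemma claim1 [Finite G] (hG : IsPGroup 2 G)
    (c d : G) (hc : c ∈ Subgroup.lowerCentralSeries (⊤ : Subgroup G) 1) (hd : d ∈ Subgroup.lowerCentralSeries (⊤ : Subgroup G) 1)
    (h3 : Subgroup.lowerCentralSeries (⊤ : Subgroup G) 2 = Subgroup.closure ({c ^ 2, d ^ 2} ∪
      (Subgroup.lowerCentralSeries (⊤ : Subgroup G) 3 : Set G)))
    (hsq2 : ∀ x : ↥(Subgroup.lowerCentralSeries (⊤ : Subgroup G) 1),
      x ^ 2 ∈ (Subgroup.lowerCentralSeries (⊤ : Subgroup G) 2).subgroupOf (Subgroup.lowerCentralSeries (⊤ : Subgroup G) 1)) :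
    (Subgroup.lowerCentralSeries (⊤ : Subgroup G) 2).subgroupOf (Subgroup.lowerCentralSeries (⊤ : Subgroup G) 1) = SS G := by
  apply le_antisymm
  · intro x hx
    rw [Subgroup.mem_subgroupOf] at hx
    have := step1 hG c d hc hd h3 hx
    rw [← map_SS] at this
    obtain ⟨y, hy, hxy⟩ := this
    rwa [show y = x from Subgroup.subtype_injective _ hxy] at hy
  · rw [SS]
    apply sup_le
    · rw [commutator_def, Subgroup.commutator_le]
      intro g₁ _ g₂ _
      rw [Subgroup.mem_subgroupOf]
      have hdef : Subgroup.lowerCentralSeries (⊤ : Subgroup G) 2 = ⁅Subgroup.lowerCentralSeries (⊤ : Subgroup G) 1, ⊤⁆ := rfl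
      rw [hdef]
      have : ((⁅g₁, g₂⁆ : ↥(Subgroup.lowerCentralSeries (⊤ : Subgroup G) 1)) : G) = ⁅(g₁ : G), (g₂ : G)⁆ := by
        simp [commutatorElement_def]; rfl
      rw [this]
      exact Subgroup.commutator_mem_commutator g₁.2 (Subgroup.mem_top _)
    · rw [Subgroup.closure_le]
      rintro _ ⟨x, rfl⟩
      exact hsq2 x
end

section
variable {G : Type*} [Group G]

private lemma quot_iso
    (hLS : (Subgroup.lowerCentralSeries (⊤ : Subgroup G) 2).subgroupOf (Subgroup.lowerCentralSeries (⊤ : Subgroup G) 1) = SS G)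
    (φ₂ : ((Subgroup.lowerCentralSeries (⊤ : Subgroup G) 1) ⧸
      (Subgroup.lowerCentralSeries (⊤ : Subgroup G) 2).subgroupOf (Subgroup.lowerCentralSeries (⊤ : Subgroup G) 1)) ≃*
      Multiplicative (ZMod 2 × ZMod 2)) :
    Nonempty ((Abelianization ↥(Subgroup.lowerCentralSeries (⊤ : Subgroup G) 1) ⧸
      (powMonoidHom 2 : Abelianization ↥(Subgroup.lowerCentralSeries (⊤ : Subgroup G) 1) →*
        Abelianization ↥(Subgroup.lowerCentralSeries (⊤ : Subgroup G) 1)).range) ≃*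
      Multiplicative (ZMod 2 × ZMod 2)) := by
  set H : Subgroup G := Subgroup.lowerCentralSeries (⊤ : Subgroup G) 1
  set L : Subgroup ↥H := (Subgroup.lowerCentralSeries (⊤ : Subgroup G) 2).subgroupOf H
  set A := Abelianization ↥H
  set R : Subgroup A := (powMonoidHom 2 : A →* A).range
  set f : ↥H →* Multiplicative (ZMod 2 × ZMod 2) :=
    φ₂.toMonoidHom.comp (QuotientGroup.mk' L) with hf
  set φ' : A →* Multiplicative (ZMod 2 × ZMod 2) := Abelianization.lift f with hφ'
  have hofs : Function.Surjective (Abelianization.of : ↥H →* A) :=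
    fun a => Quotient.inductionOn' a fun x => ⟨x, rfl⟩
  have happ : ∀ x : ↥H, φ' (Abelianization.of x) = φ₂ (QuotientGroup.mk' L x) := fun x => rfl
  have hsurj : Function.Surjective φ' := by
    intro y
    obtain ⟨q, rfl⟩ := φ₂.surjective y
    obtain ⟨x, rfl⟩ := QuotientGroup.mk'_surjective L q
    exact ⟨Abelianization.of x, happ x⟩
  have hmapL : Subgroup.map (Abelianization.of : ↥H →* A) L = R := by
    rw [hLS, SS, Subgroup.map_sup]
    have h1 : Subgroup.map (Abelianization.of : ↥H →* A) (commutator ↥H) = ⊥ := by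
      rw [Subgroup.map_eq_bot_iff]
      intro x hx
      rw [MonoidHom.mem_ker]
      exact (QuotientGroup.eq_one_iff x).mpr hx
    have h2 : Subgroup.map (Abelianization.of : ↥H →* A)
        (Subgroup.closure (Set.range fun x : ↥H => x ^ 2)) = R := by
      rw [MonoidHom.map_closure]
      have himg : (Abelianization.of : ↥H →* A) '' (Set.range fun x : ↥H => x ^ 2) =
          Set.range fun a : A => a ^ 2 := by
        ext y
        constructor
        · rintro ⟨_, ⟨x, rfl⟩, rfl⟩
          exact ⟨Abelianization.of x, by rw [map_pow]⟩
        · rintro ⟨a, rfl⟩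
          obtain ⟨x, rfl⟩ := hofs a
          exact ⟨x ^ 2, ⟨x, rfl⟩, by rw [map_pow]⟩
      rw [himg]
      have : (Set.range fun a : A => a ^ 2) = ↑R := by
        rw [MonoidHom.coe_range]
        rfl
      rw [this, Subgroup.closure_eq]
    rw [h1, h2, bot_sup_eq]
  have hker : φ'.ker = R := by
    apply le_antisymm
    · intro a ha
      rw [MonoidHom.mem_ker] at ha
      obtain ⟨x, rfl⟩ := hofs a
      rw [happ] at ha
      have hx : x ∈ L :=
        (QuotientGroup.eq_one_iff x).mp (φ₂.injective (by rw [map_one]; exact ha))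
      rw [← hmapL]
      exact Subgroup.mem_map_of_mem _ hx
    · rw [← hmapL]
      rintro _ ⟨x, hx, rfl⟩
      rw [MonoidHom.mem_ker, happ]
      have : QuotientGroup.mk' L x = 1 := (QuotientGroup.eq_one_iff x).mpr hx
      rw [this, map_one]
  exact ⟨(QuotientGroup.quotientMulEquivOfEq hker.symm).trans
    (QuotientGroup.quotientKerEquivOfSurjective φ' hsurj)⟩
end

theorem derived_mod_second_derived_of_G3_two_gen {G : Type*} [Group G] [Finite G]
    (hG : IsPGroup 2 G) (a₁ a₂ a₃ : G)
    (hgen : Subgroup.closure {a₁, a₂, a₃} = ⊤)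
    (h1 : Nonempty ((G ⧸ Subgroup.lowerCentralSeries (⊤ : Subgroup G) 1) ≃*
      Multiplicative (ZMod 2 × ZMod 2 × ZMod 2)))
    (h2 : Nonempty ((Subgroup.lowerCentralSeries (⊤ : Subgroup G) 1 ⧸
      (Subgroup.lowerCentralSeries (⊤ : Subgroup G) 2).subgroupOf (Subgroup.lowerCentralSeries (⊤ : Subgroup G) 1)) ≃*
      Multiplicative (ZMod 2 × ZMod 2)))
    (h3 : Subgroup.lowerCentralSeries (⊤ : Subgroup G) 2 =
      Subgroup.closure ({(commu a₁ a₂) ^ 2, (commu a₁ a₃) ^ 2} ∪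
        (Subgroup.lowerCentralSeries (⊤ : Subgroup G) 3 : Set G))) :
    ∃ m n : ℕ, 0 < m ∧ 0 < n ∧
      Nonempty (Abelianization (Subgroup.lowerCentralSeries (⊤ : Subgroup G) 1 : Subgroup G) ≃*
        Multiplicative (ZMod (2 ^ m) × ZMod (2 ^ n))) := by
  classical
  obtain ⟨φ₂⟩ := h2
  have hmem : ∀ x y : G, commu x y ∈ Subgroup.lowerCentralSeries (⊤ : Subgroup G) 1 := by
    intro x y
    have hxy : commu x y = ⁅x⁻¹, y⁻¹⁆ := by
      simp [commu, commutatorElement_def]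
    rw [hxy, show Subgroup.lowerCentralSeries (⊤ : Subgroup G) 1 = ⁅(⊤ : Subgroup G), ⊤⁆ from rfl]
    exact Subgroup.commutator_mem_commutator (Subgroup.mem_top _) (Subgroup.mem_top _)
  have hsq2 : ∀ x : ↥(Subgroup.lowerCentralSeries (⊤ : Subgroup G) 1),
      x ^ 2 ∈ (Subgroup.lowerCentralSeries (⊤ : Subgroup G) 2).subgroupOf (Subgroup.lowerCentralSeries (⊤ : Subgroup G) 1) := by
    intro x
    have hq : (QuotientGroup.mk' ((Subgroup.lowerCentralSeries (⊤ : Subgroup G) 2).subgroupOf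
        (Subgroup.lowerCentralSeries (⊤ : Subgroup G) 1))) (x ^ 2) = 1 := by
      apply φ₂.injective
      rw [map_pow, map_pow, map_one]
      exact sq_eq_one_z22 _
    exact (QuotientGroup.eq_one_iff _).mp hq
  have hLS := claim1 hG _ _ (hmem a₁ a₂) (hmem a₁ a₃) h3 hsq2
  obtain ⟨eqQ⟩ := quot_iso hLS φ₂
  set A := Abelianization ↥(Subgroup.lowerCentralSeries (⊤ : Subgroup G) 1) with hAdef
  have hA : IsPGroup 2 A :=
    (hG.to_subgroup (Subgroup.lowerCentralSeries (⊤ : Subgroup G) 1)).to_quotient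
      (commutator ↥(Subgroup.lowerCentralSeries (⊤ : Subgroup G) 1))
  obtain ⟨ι, fι, nn, hnn, ⟨ψ⟩⟩ := CommGroup.equiv_prod_multiplicative_zmod_of_finite A
  set R : Subgroup A := (powMonoidHom 2 : A →* A).range with hRdef
  set K : Subgroup A := (powMonoidHom 2 : A →* A).ker with hKdef
  have hcard4 : Nat.card (A ⧸ R) = 4 := by
    rw [Nat.card_congr eqQ.toEquiv, Nat.card_eq_fintype_card]
    rfl
  have c1 : Nat.card A = 4 * Nat.card R := by
    rw [Subgroup.card_eq_card_quotient_mul_card_subgroup R, hcard4]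
  have c2 : Nat.card A = Nat.card R * Nat.card K := by
    rw [Subgroup.card_eq_card_quotient_mul_card_subgroup K]
    congr 1
    exact Nat.card_congr (QuotientGroup.quotientKerEquivRange _).toEquiv
  have hRpos : 0 < Nat.card R := Nat.card_pos
  have hK4 : Nat.card K = 4 := by
    have h44 : 4 * Nat.card R = Nat.card R * Nat.card K := c1 ▸ c2
    rw [mul_comm (Nat.card R) (Nat.card K)] at h44
    exact (Nat.eq_of_mul_eq_mul_right hRpos h44).symm
  have hKsub : Nat.card {x : A // x ^ 2 = 1} = 4 := by
    rw [← hK4]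
    exact Nat.card_congr (Equiv.subtypeEquivRight (fun x => by
      simp [hKdef, MonoidHom.mem_ker, powMonoidHom_apply])).symm
  have hPT : Nat.card {y : (∀ i, Multiplicative (ZMod (nn i))) // y ^ 2 = 1} = 4 := by
    rw [← hKsub]
    exact (Nat.card_congr (Equiv.subtypeEquiv ψ.toEquiv (fun x => by
      show x ^ 2 = 1 ↔ (ψ x) ^ 2 = 1
      rw [← map_pow]
      exact (MulEquiv.map_eq_one_iff ψ).symm))).symm
  have hP : ∀ x : (∀ i, Multiplicative (ZMod (nn i))), ∃ k, x ^ 2 ^ k = 1 := by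
    intro x
    obtain ⟨k, hk⟩ := hA (ψ.symm x)
    refine ⟨k, ?_⟩
    have h2 := congrArg ψ hk
    rwa [map_pow, MulEquiv.apply_symm_apply, map_one] at h2
  have hpow : ∀ i, ∃ k, 0 < k ∧ nn i = 2 ^ k := by
    intro i
    obtain ⟨k, hδ⟩ := hP (Pi.mulSingle i (Multiplicative.ofAdd (1 : ZMod (nn i))))
    have hcomp := congrFun hδ i
    rw [Pi.pow_apply, Pi.mulSingle_eq_same, Pi.one_apply] at hcomp
    have hzero : ((2 ^ k : ℕ) : ZMod (nn i)) = 0 := by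
      have := congrArg Multiplicative.toAdd hcomp
      simpa [toAdd_pow, nsmul_eq_mul] using this
    rw [ZMod.natCast_eq_zero_iff] at hzero
    obtain ⟨j, _, hje⟩ := (Nat.dvd_prime_pow Nat.prime_two).mp hzero
    refine ⟨j, ?_, hje⟩
    rcases Nat.eq_zero_or_pos j with rfl | h
    · exfalso
      have := hnn i
      rw [hje] at this
      norm_num at this
    · exact h
  choose e he hne using hpow
  have hcard2 : ∀ i, Nat.card {z : Multiplicative (ZMod (nn i)) // z ^ 2 = 1} = 2 := by
    intro i
    rw [hne i]
    exact card_two_torsion_zmod _ (he i)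
  have hpi : Nat.card {y : (∀ i, Multiplicative (ZMod (nn i))) // y ^ 2 = 1} =
      2 ^ Fintype.card ι := by
    have E2 : {y : (∀ i, Multiplicative (ZMod (nn i))) // y ^ 2 = 1} ≃
        ∀ i, {z : Multiplicative (ZMod (nn i)) // z ^ 2 = 1} :=
      (Equiv.subtypeEquiv (Equiv.refl _) (fun y => by
        simp only [Equiv.refl_apply, funext_iff, Pi.pow_apply, Pi.one_apply]
        )).trans (Equiv.subtypePiEquivPi)
    rw [Nat.card_congr E2, Nat.card_pi]
    simp [hcard2, Finset.prod_const, Finset.card_univ]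
  have hcardι : Fintype.card ι = 2 := by
    have hh : (2 : ℕ) ^ Fintype.card ι = 2 ^ 2 := by
      rw [← hpi, hPT]
      norm_num
    exact Nat.pow_right_injective (le_refl 2) hh
  let σ : ι ≃ Fin 2 := Fintype.equivFinOfCardEq hcardι
  refine ⟨e (σ.symm 0), e (σ.symm 1), he _, he _, ⟨?_⟩⟩
  have E1 : (∀ i, Multiplicative (ZMod (nn i))) ≃*
      (∀ b : Fin 2, Multiplicative (ZMod (nn (σ.symm b)))) :=
    { Equiv.piCongrLeft' (fun i => Multiplicative (ZMod (nn i))) σ with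
      map_mul' := fun f g => rfl }
  have E2 : (∀ b : Fin 2, Multiplicative (ZMod (nn (σ.symm b)))) ≃*
      Multiplicative (ZMod (nn (σ.symm 0))) × Multiplicative (ZMod (nn (σ.symm 1))) :=
    { piFinTwoEquiv (fun b => Multiplicative (ZMod (nn (σ.symm b)))) with
      map_mul' := fun f g => rfl }
  have E3 : Multiplicative (ZMod (nn (σ.symm 0))) × Multiplicative (ZMod (nn (σ.symm 1))) ≃*
      Multiplicative (ZMod (2 ^ e (σ.symm 0)) × ZMod (2 ^ e (σ.symm 1))) := by
    rw [hne (σ.symm 0), hne (σ.symm 1)]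
    exact (MulEquiv.prodMultiplicative _ _).symm
  exact ((ψ.trans E1).trans E2).trans E3
end

section
/- Let G be a finite 2-group generated by a₁, a₂, a₃ subject (modulo G₃) to a₁² ≡ a₂² ≡ a₃² ≡ [a₂,a₃] ≡ 1 mod G₃, with G/G₂ ≅ (Z/2)³ and G₂/G₃ ≅ (Z/2)² (so G/G₃ is the group 32.033). Then the rank of the commutator subgroup G' is at most 3. -/
open scoped commutatorElement

namespace RankAux

variable {G : Type*} [Group G]

abbrev lowerCentralSeries (H : Type*) [Group H] (n : ℕ) : Subgroup H :=
  (⊤ : Subgroup H).lowerCentralSeries n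

lemma lowerCentralSeries_succ (n : ℕ) :
    lowerCentralSeries G (n + 1) = ⁅lowerCentralSeries G n, ⊤⁆ := rfl

lemma lowerCentralSeries_one : lowerCentralSeries G 1 = commutator G :=
  Subgroup.top_lowerCentralSeries_one

lemma lowerCentralSeries_antitone : Antitone (lowerCentralSeries G) :=
  Subgroup.lowerCentralSeries_antitone _

lemma nilpotent_iff_lowerCentralSeries :
    Group.IsNilpotent G ↔ ∃ n, lowerCentralSeries G n = ⊥ :=
  Subgroup.nilpotent_iff_lowerCentralSeries

lemma comm_mem_lcs {n : ℕ} {x : G} (hx : x ∈ lowerCentralSeries G n) (g : G) :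
    ⁅x, g⁆ ∈ lowerCentralSeries G (n + 1) := by
  rw [lowerCentralSeries_succ]
  exact Subgroup.commutator_mem_commutator hx (Subgroup.mem_top g)

lemma comm_mem_lcs' {n : ℕ} {x : G} (hx : x ∈ lowerCentralSeries G n) (g : G) :
    ⁅g, x⁆ ∈ lowerCentralSeries G (n + 1) := by
  have : ⁅g, x⁆ = ⁅x, g⁆⁻¹ := by group
  rw [this]
  exact inv_mem (comm_mem_lcs hx g)

lemma comm_mem_lcs_one (x y : G) : ⁅x, y⁆ ∈ lowerCentralSeries G 1 := by
  rw [lowerCentralSeries_one, commutator_def]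
  exact Subgroup.commutator_mem_commutator (Subgroup.mem_top x) (Subgroup.mem_top y)

/-- conjugation stability below level n -/
lemma conj_mem {S : Subgroup G} {n : ℕ} (hle : lowerCentralSeries G (n+1) ≤ S)
    {v : G} (hvL : v ∈ lowerCentralSeries G n) (hvS : v ∈ S) (g : G) :
    g * v * g⁻¹ ∈ S := by
  have h1 : g * v * g⁻¹ = v * ⁅v⁻¹, g⁆ := by group
  rw [h1]
  exact S.mul_mem hvS (hle (comm_mem_lcs (inv_mem hvL) g))

lemma jacobi_aux {H : Type*} [Group H] (x y z : H)
    (h2 : ∀ g, Commute ⁅⁅x,y⁆,z⁆ g)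
    (h3x : Commute x ⁅z,y⁆)
    (h3w : Commute ⁅x,y*z⁆ ⁅z,y⁆)
    (h4 : Commute ⁅x,y⁆ ⁅x,z⁆) :
    ⁅⁅x,z⁆,y⁆ = ⁅⁅x,y⁆,z⁆ := by
  have hc1 : ⁅x, ⁅z,y⁆⁆ = 1 := commutatorElement_eq_one_iff_commute.mpr h3x
  have e1 : ⁅x, z*y⁆ = ⁅x, y*z⁆ := by
    calc ⁅x, z*y⁆ = ⁅x, ⁅z,y⁆⁆ * (⁅z,y⁆ * ⁅x, y*z⁆ * ⁅z,y⁆⁻¹) := by group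
    _ = ⁅z,y⁆ * ⁅x, y*z⁆ * ⁅z,y⁆⁻¹ := by rw [hc1, one_mul]
    _ = ⁅x, y*z⁆ := by rw [← h3w.eq]; group
  have e2 : ⁅x, y*z⁆ = ⁅x,y⁆ * ⁅⁅x,z⁆,y⁆⁻¹ * ⁅x,z⁆ := by group
  have e3 : ⁅x, z*y⁆ = ⁅x,z⁆ * ⁅⁅x,y⁆,z⁆⁻¹ * ⁅x,y⁆ := by group
  rw [e2, e3] at e1
  have hBc : ∀ w : H, w * ⁅⁅x,y⁆,z⁆⁻¹ = ⁅⁅x,y⁆,z⁆⁻¹ * w := fun w => ((h2 w).inv_left.symm).eq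
  have h5 : ⁅x,z⁆ * ⁅x,y⁆ = ⁅x,y⁆ * ⁅x,z⁆ := h4.symm.eq
  have hmain : ⁅⁅x,z⁆,y⁆⁻¹ = ⁅⁅x,y⁆,z⁆⁻¹ := by
    calc ⁅⁅x,z⁆,y⁆⁻¹
        = ⁅x,y⁆⁻¹ * (⁅x,y⁆ * ⁅⁅x,z⁆,y⁆⁻¹ * ⁅x,z⁆) * ⁅x,z⁆⁻¹ := by group
      _ = ⁅x,y⁆⁻¹ * (⁅x,z⁆ * ⁅⁅x,y⁆,z⁆⁻¹ * ⁅x,y⁆) * ⁅x,z⁆⁻¹ := by rw [← e1]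
      _ = (⁅x,y⁆⁻¹ * ⁅x,z⁆) * ⁅⁅x,y⁆,z⁆⁻¹ * (⁅x,y⁆ * ⁅x,z⁆⁻¹) := by group
      _ = ⁅⁅x,y⁆,z⁆⁻¹ * (⁅x,y⁆⁻¹ * ⁅x,z⁆) * (⁅x,y⁆ * ⁅x,z⁆⁻¹) := by
            rw [hBc (⁅x,y⁆⁻¹ * ⁅x,z⁆)]
      _ = ⁅⁅x,y⁆,z⁆⁻¹ * (⁅x,y⁆⁻¹ * (⁅x,z⁆ * ⁅x,y⁆) * ⁅x,z⁆⁻¹) := by group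
      _ = ⁅⁅x,y⁆,z⁆⁻¹ * (⁅x,y⁆⁻¹ * (⁅x,y⁆ * ⁅x,z⁆) * ⁅x,z⁆⁻¹) := by rw [h5]
      _ = ⁅⁅x,y⁆,z⁆⁻¹ := by group
  exact inv_injective hmain

lemma FA (a₁ a₂ a₃ : G) (hgen : Subgroup.closure {a₁, a₂, a₃} = ⊤)
    (hc : ⁅a₂, a₃⁆ ∈ lowerCentralSeries G 2) :
    lowerCentralSeries G 1 ≤ Subgroup.closure {⁅a₁,a₂⁆, ⁅a₁,a₃⁆} ⊔ lowerCentralSeries G 2 := by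
  set S := Subgroup.closure {⁅a₁,a₂⁆, ⁅a₁,a₃⁆} ⊔ lowerCentralSeries G 2 with hS
  set K := S ⊓ lowerCentralSeries G 1 with hK
  have hL2S : lowerCentralSeries G 2 ≤ S := le_sup_right
  have hL2K : lowerCentralSeries G 2 ≤ K :=
    le_inf hL2S (lowerCentralSeries_antitone (by norm_num))
  have hKconj : ∀ v ∈ K, ∀ g : G, g * v * g⁻¹ ∈ K := by
    intro v hv g
    exact ⟨conj_mem hL2S hv.2 hv.1 g,
      ((by infer_instance : (lowerCentralSeries G 1).Normal)).conj_mem v hv.2 g⟩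
  have hmemK : ∀ {v : G}, v ∈ lowerCentralSeries G 1 → v ∈ Subgroup.closure {⁅a₁,a₂⁆, ⁅a₁,a₃⁆} → v ∈ K :=
    fun hv hv' => ⟨Subgroup.mem_sup_left hv', hv⟩
  have base9 : ∀ x ∈ ({a₁, a₂, a₃} : Set G), ∀ y ∈ ({a₁, a₂, a₃} : Set G), ⁅x, y⁆ ∈ K := by
    have h12 : ⁅a₁,a₂⁆ ∈ K := hmemK (comm_mem_lcs_one _ _)
      (Subgroup.subset_closure (by simp))
    have h13 : ⁅a₁,a₃⁆ ∈ K := hmemK (comm_mem_lcs_one _ _)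
      (Subgroup.subset_closure (by simp))
    have h23 : ⁅a₂,a₃⁆ ∈ K := hL2K hc
    have hinv : ∀ {p q : G}, ⁅p,q⁆ ∈ K → ⁅q,p⁆ ∈ K := by
      intro p q h
      have : ⁅q,p⁆ = ⁅p,q⁆⁻¹ := by group
      rw [this]; exact inv_mem h
    have hself : ∀ p : G, ⁅p,p⁆ ∈ K := by
      intro p
      have : ⁅p,p⁆ = 1 := by group
      rw [this]; exact one_mem K
    rintro x (rfl | rfl | rfl) y (rfl | rfl | rfl) <;>
      first
        | exact hself _
        | exact h12 | exact h13 | exact h23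
        | exact hinv h12 | exact hinv h13 | exact hinv h23
  have hmemtop : ∀ x : G, x ∈ Subgroup.closure ({a₁, a₂, a₃} : Set G) := by
    intro x; rw [hgen]; trivial
  have step1 : ∀ y ∈ ({a₁, a₂, a₃} : Set G), ∀ x : G, ⁅x, y⁆ ∈ K := by
    intro y hy x
    refine Subgroup.closure_induction (fun w hw => base9 w hw y hy) ?_ ?_ ?_ (hmemtop x)
    · have : (⁅(1:G), y⁆) = 1 := by group
      rw [this]; exact one_mem K
    · intro p q _ _ hp hq
      have : ⁅p * q, y⁆ = (p * ⁅q, y⁆ * p⁻¹) * ⁅p, y⁆ := by group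
      rw [this]; exact K.mul_mem (hKconj _ hq p) hp
    · intro p _ hp
      have : ⁅p⁻¹, y⁆ = p⁻¹ * ⁅p, y⁆⁻¹ * p := by group
      rw [this]
      have := hKconj _ (inv_mem hp) p⁻¹
      simpa using this
  have step2 : ∀ x y : G, ⁅x, y⁆ ∈ K := by
    intro x y
    refine Subgroup.closure_induction (fun w hw => step1 w hw x) ?_ ?_ ?_ (hmemtop y)
    · have : (⁅x, (1:G)⁆) = 1 := by group
      rw [this]; exact one_mem K
    · intro p q _ _ hp hq
      have : ⁅x, p * q⁆ = ⁅x, p⁆ * (p * ⁅x, q⁆ * p⁻¹) := by group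
      rw [this]; exact K.mul_mem hp (hKconj _ hq p)
    · intro p _ hp
      have : ⁅x, p⁻¹⁆ = p⁻¹ * ⁅x, p⁆⁻¹ * p := by group
      rw [this]
      have := hKconj _ (inv_mem hp) p⁻¹
      simpa using this
  calc lowerCentralSeries G 1 = ⁅(⊤ : Subgroup G), ⊤⁆ := by
        rw [lowerCentralSeries_one, commutator_def]
    _ ≤ K := Subgroup.commutator_le.mpr fun x _ y _ => step2 x y
    _ ≤ S := inf_le_left



/-- squares of elements of the derived subgroup -/
def Sq (G : Type*) [Group G] : Subgroup G :=
  Subgroup.closure {g | ∃ x ∈ lowerCentralSeries G 1, g = x ^ 2}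

instance : (Sq G).Normal := by
  constructor
  intro n hn g
  induction hn using Subgroup.closure_induction with
  | mem w hw =>
      obtain ⟨x, hx, rfl⟩ := hw
      have : g * x ^ 2 * g⁻¹ = (g * x * g⁻¹) ^ 2 := by rw [pow_two, pow_two]; group
      rw [this]
      exact Subgroup.subset_closure ⟨g * x * g⁻¹,
        ((by infer_instance : (lowerCentralSeries G 1).Normal)).conj_mem x hx g, rfl⟩
  | one => simpa using one_mem _
  | mul p q _ _ hp hq =>
      have : g * (p * q) * g⁻¹ = (g * p * g⁻¹) * (g * q * g⁻¹) := by group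
      rw [this]; exact mul_mem hp hq
  | inv p _ hp =>
      have : g * p⁻¹ * g⁻¹ = (g * p * g⁻¹)⁻¹ := by group
      rw [this]; exact inv_mem hp

def Phi (G : Type*) [Group G] : Subgroup G :=
  ⁅lowerCentralSeries G 1, lowerCentralSeries G 1⁆ ⊔ Sq G

instance : (Phi G).Normal := by unfold Phi; infer_instance

lemma sq_mem_Sq {x : G} (hx : x ∈ lowerCentralSeries G 1) : x ^ 2 ∈ Sq G :=
  Subgroup.subset_closure ⟨x, hx, rfl⟩

lemma sq_mem_Phi {x : G} (hx : x ∈ lowerCentralSeries G 1) : x ^ 2 ∈ Phi G :=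
  Subgroup.mem_sup_right (sq_mem_Sq hx)

lemma comm_mem_Phi {x y : G} (hx : x ∈ lowerCentralSeries G 1)
    (hy : y ∈ lowerCentralSeries G 1) : ⁅x, y⁆ ∈ Phi G :=
  Subgroup.mem_sup_left (Subgroup.commutator_mem_commutator hx hy)

lemma normal_comm_mem {N : Subgroup G} [hN : N.Normal] {f : G} (hf : f ∈ N) (g : G) :
    ⁅f, g⁆ ∈ N := by
  have : ⁅f, g⁆ = f * (g * f⁻¹ * g⁻¹) := by group
  rw [this]
  exact mul_mem hf (hN.conj_mem _ (inv_mem hf) g)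


section FB
variable (a₁ a₂ a₃ : G)

lemma FB (hgen : Subgroup.closure {a₁, a₂, a₃} = ⊤)
    (ha₁ : a₁ ^ 2 ∈ lowerCentralSeries G 2)
    (ha₂ : a₂ ^ 2 ∈ lowerCentralSeries G 2)
    (ha₃ : a₃ ^ 2 ∈ lowerCentralSeries G 2)
    (hc : ⁅a₂, a₃⁆ ∈ lowerCentralSeries G 2) :
    lowerCentralSeries G 2 ≤
      Subgroup.closure {⁅⁅a₁,a₂⁆,a₃⁆} ⊔ Phi G ⊔ lowerCentralSeries G 3 := by
  set S := Subgroup.closure {⁅⁅a₁,a₂⁆,a₃⁆} ⊔ Phi G ⊔ lowerCentralSeries G 3 with hSdef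
  set K := S ⊓ lowerCentralSeries G 2 with hKdef
  have hL3S : lowerCentralSeries G 3 ≤ S := le_sup_right
  have hPhiS : Phi G ≤ S := le_trans le_sup_right le_sup_left
  have huS : (⁅⁅a₁,a₂⁆,a₃⁆ : G) ∈ S :=
    Subgroup.mem_sup_left (Subgroup.mem_sup_left (Subgroup.subset_closure rfl))
  have hL3K : lowerCentralSeries G 3 ≤ K :=
    le_inf hL3S (lowerCentralSeries_antitone (by norm_num))
  have hKconj : ∀ v ∈ K, ∀ g : G, g * v * g⁻¹ ∈ K := by
    intro v hv g
    exact ⟨conj_mem hL3S hv.2 hv.1 g,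
      ((by infer_instance : (lowerCentralSeries G 2).Normal)).conj_mem v hv.2 g⟩
  have hc2L1 : (⁅a₁,a₂⁆ : G) ∈ lowerCentralSeries G 1 := comm_mem_lcs_one _ _
  have hc3L1 : (⁅a₁,a₃⁆ : G) ∈ lowerCentralSeries G 1 := comm_mem_lcs_one _ _
  have R1 : (⁅⁅a₁,a₂⁆,a₁⁆ : G) ∈ K := by
    refine ⟨?_, comm_mem_lcs hc2L1 a₁⟩
    have hid : (⁅⁅a₁,a₂⁆,a₁⁆ : G) = ⁅a₁,a₂⁆ ^ 2 * ⁅a₂, a₁ ^ 2⁆ := by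
      rw [pow_two, pow_two]; group
    rw [hid]
    exact S.mul_mem (hPhiS (sq_mem_Phi hc2L1)) (hL3S (comm_mem_lcs' ha₁ a₂))
  have R2 : (⁅⁅a₁,a₂⁆,a₂⁆ : G) ∈ K := by
    refine ⟨?_, comm_mem_lcs hc2L1 a₂⟩
    have hid : (⁅⁅a₁,a₂⁆,a₂⁆ : G) =
        ⁅a₁,a₂⁆ ^ 2 * (⁅a₁,a₂⁆⁻¹ * ⁅a₁, a₂ ^ 2⁆⁻¹ * (⁅a₁,a₂⁆⁻¹)⁻¹) := by
      rw [pow_two, pow_two]; group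
    rw [hid]
    exact S.mul_mem (hPhiS (sq_mem_Phi hc2L1))
      (hL3S (((by infer_instance : (lowerCentralSeries G 3).Normal)).conj_mem _
        (inv_mem (comm_mem_lcs' ha₂ a₁)) _))
  have R3 : (⁅⁅a₁,a₂⁆,a₃⁆ : G) ∈ K := ⟨huS, comm_mem_lcs hc2L1 a₃⟩
  have R4 : (⁅⁅a₁,a₃⁆,a₁⁆ : G) ∈ K := by
    refine ⟨?_, comm_mem_lcs hc3L1 a₁⟩
    have hid : (⁅⁅a₁,a₃⁆,a₁⁆ : G) = ⁅a₁,a₃⁆ ^ 2 * ⁅a₃, a₁ ^ 2⁆ := by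
      rw [pow_two, pow_two]; group
    rw [hid]
    exact S.mul_mem (hPhiS (sq_mem_Phi hc3L1)) (hL3S (comm_mem_lcs' ha₁ a₃))
  have R5 : (⁅⁅a₁,a₃⁆,a₃⁆ : G) ∈ K := by
    refine ⟨?_, comm_mem_lcs hc3L1 a₃⟩
    have hid : (⁅⁅a₁,a₃⁆,a₃⁆ : G) =
        ⁅a₁,a₃⁆ ^ 2 * (⁅a₁,a₃⁆⁻¹ * ⁅a₁, a₃ ^ 2⁆⁻¹ * (⁅a₁,a₃⁆⁻¹)⁻¹) := by
      rw [pow_two, pow_two]; group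
    rw [hid]
    exact S.mul_mem (hPhiS (sq_mem_Phi hc3L1))
      (hL3S (((by infer_instance : (lowerCentralSeries G 3).Normal)).conj_mem _
        (inv_mem (comm_mem_lcs' ha₃ a₁)) _))
  have R6 : (⁅⁅a₁,a₃⁆,a₂⁆ : G) ∈ K := by
    refine ⟨?_, comm_mem_lcs hc3L1 a₂⟩
    set N := ⁅lowerCentralSeries G 1, lowerCentralSeries G 1⁆ ⊔ lowerCentralSeries G 3 with hNdef
    haveI hNnormal : N.Normal := by rw [hNdef]; infer_instance
    have hNS : N ≤ S := sup_le (le_trans le_sup_left hPhiS) hL3S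
    set π := QuotientGroup.mk' N with hπ
    have hcommπ : ∀ {v w : G}, ⁅v,w⁆ ∈ N → Commute (π v) (π w) := by
      intro v w h
      rw [← commutatorElement_eq_one_iff_commute, ← map_commutatorElement]
      exact (QuotientGroup.eq_one_iff _).mpr h
    have h2 : ∀ g, Commute ⁅⁅π a₁, π a₂⁆, π a₃⁆ g := by
      intro g
      obtain ⟨g', rfl⟩ := QuotientGroup.mk'_surjective N g
      rw [← map_commutatorElement, ← map_commutatorElement]
      exact hcommπ (Subgroup.mem_sup_right
        (comm_mem_lcs (comm_mem_lcs (comm_mem_lcs_one a₁ a₂) a₃) g'))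
    have h3x : Commute (π a₁) ⁅π a₃, π a₂⁆ := by
      rw [← map_commutatorElement]
      refine hcommπ (Subgroup.mem_sup_right ?_)
      have h32 : (⁅a₃,a₂⁆ : G) ∈ lowerCentralSeries G 2 := by
        have hi : (⁅a₃,a₂⁆ : G) = ⁅a₂,a₃⁆⁻¹ := by group
        rw [hi]; exact inv_mem hc
      exact comm_mem_lcs' h32 a₁
    have h3w : Commute ⁅π a₁, π a₂ * π a₃⁆ ⁅π a₃, π a₂⁆ := by
      rw [← map_mul, ← map_commutatorElement, ← map_commutatorElement]
      exact hcommπ (Subgroup.mem_sup_left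
        (Subgroup.commutator_mem_commutator (comm_mem_lcs_one _ _) (comm_mem_lcs_one _ _)))
    have h4 : Commute ⁅π a₁, π a₂⁆ ⁅π a₁, π a₃⁆ := by
      rw [← map_commutatorElement, ← map_commutatorElement]
      exact hcommπ (Subgroup.mem_sup_left
        (Subgroup.commutator_mem_commutator (comm_mem_lcs_one _ _) (comm_mem_lcs_one _ _)))
    have hjac := jacobi_aux (π a₁) (π a₂) (π a₃) h2 h3x h3w h4
    have hone : π (⁅⁅a₁,a₃⁆,a₂⁆ * ⁅⁅a₁,a₂⁆,a₃⁆⁻¹) = 1 := by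
      rw [map_mul, map_inv, map_commutatorElement, map_commutatorElement,
        map_commutatorElement, map_commutatorElement, hjac]
      group
    have hmemN := (QuotientGroup.eq_one_iff _).mp hone
    have hsplit : (⁅⁅a₁,a₃⁆,a₂⁆ : G)
        = (⁅⁅a₁,a₃⁆,a₂⁆ * ⁅⁅a₁,a₂⁆,a₃⁆⁻¹) * ⁅⁅a₁,a₂⁆,a₃⁆ := by group
    rw [hsplit]
    exact S.mul_mem (hNS hmemN) huS
  have hmemtop : ∀ x : G, x ∈ Subgroup.closure ({a₁, a₂, a₃} : Set G) := by
    intro x; rw [hgen]; trivial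
  have subind : ∀ c : G, c ∈ lowerCentralSeries G 1 →
      (⁅c,a₁⁆ ∈ K) → (⁅c,a₂⁆ ∈ K) → (⁅c,a₃⁆ ∈ K) → ∀ g : G, ⁅c,g⁆ ∈ K := by
    intro c _ k1 k2 k3 g
    refine Subgroup.closure_induction ?_ ?_ ?_ ?_ (hmemtop g)
    · rintro w (rfl | rfl | rfl)
      exacts [k1, k2, k3]
    · have : (⁅c, (1:G)⁆) = 1 := by group
      rw [this]; exact one_mem K
    · intro p q _ _ hp hq
      have : ⁅c, p * q⁆ = ⁅c, p⁆ * (p * ⁅c, q⁆ * p⁻¹) := by group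
      rw [this]; exact K.mul_mem hp (hKconj _ hq p)
    · intro p _ hp
      have : ⁅c, p⁻¹⁆ = p⁻¹ * ⁅c, p⁆⁻¹ * p := by group
      rw [this]
      simpa using hKconj _ (inv_mem hp) p⁻¹
  have bigstep : ∀ x ∈ Subgroup.closure
      ({⁅a₁,a₂⁆, ⁅a₁,a₃⁆} ∪ (lowerCentralSeries G 2 : Set G)), ∀ g : G, ⁅x, g⁆ ∈ K := by
    intro x hx
    induction hx using Subgroup.closure_induction with
    | mem w hw =>
        rcases hw with (rfl | rfl) | hwL2
        · exact subind _ hc2L1 R1 R2 R3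
        · exact subind _ hc3L1 R4 R6 R5
        · exact fun g => hL3K (comm_mem_lcs hwL2 g)
    | one =>
        intro g
        have : (⁅(1:G), g⁆) = 1 := by group
        rw [this]; exact one_mem K
    | mul p q _ _ hp hq =>
        intro g
        have : ⁅p * q, g⁆ = (p * ⁅q, g⁆ * p⁻¹) * ⁅p, g⁆ := by group
        rw [this]; exact K.mul_mem (hKconj _ (hq g) p) (hp g)
    | inv p _ hp =>
        intro g
        have : ⁅p⁻¹, g⁆ = p⁻¹ * ⁅p, g⁆⁻¹ * p := by group
        rw [this]
        simpa using hKconj _ (inv_mem (hp g)) p⁻¹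
  have hL1le : lowerCentralSeries G 1 ≤
      Subgroup.closure ({⁅a₁,a₂⁆, ⁅a₁,a₃⁆} ∪ (lowerCentralSeries G 2 : Set G)) := by
    rw [Subgroup.closure_union, Subgroup.closure_eq]
    exact FA a₁ a₂ a₃ hgen hc
  calc lowerCentralSeries G 2 = ⁅lowerCentralSeries G 1, ⊤⁆ := lowerCentralSeries_succ 1
    _ ≤ K := Subgroup.commutator_le.mpr (fun x hx g _ => bigstep x (hL1le hx) g)
    _ ≤ S := inf_le_left

end FB

section FC
variable (a₁ a₂ a₃ : G)

lemma FC (hgen : Subgroup.closure {a₁, a₂, a₃} = ⊤)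
    (ha₁ : a₁ ^ 2 ∈ lowerCentralSeries G 2)
    (ha₂ : a₂ ^ 2 ∈ lowerCentralSeries G 2)
    (ha₃ : a₃ ^ 2 ∈ lowerCentralSeries G 2)
    (hc : ⁅a₂, a₃⁆ ∈ lowerCentralSeries G 2) :
    lowerCentralSeries G 3 ≤ Phi G ⊔ lowerCentralSeries G 4 := by
  set S := Phi G ⊔ lowerCentralSeries G 4 with hSdef
  haveI hSn : S.Normal := by rw [hSdef]; infer_instance
  have hPhiS : Phi G ≤ S := le_sup_left
  have hL4S : lowerCentralSeries G 4 ≤ S := le_sup_right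
  have hc2L1 : (⁅a₁,a₂⁆ : G) ∈ lowerCentralSeries G 1 := comm_mem_lcs_one _ _
  have huL2 : (⁅⁅a₁,a₂⁆,a₃⁆ : G) ∈ lowerCentralSeries G 2 := comm_mem_lcs hc2L1 a₃
  have huL1 : (⁅⁅a₁,a₂⁆,a₃⁆ : G) ∈ lowerCentralSeries G 1 :=
    lowerCentralSeries_antitone (by norm_num) huL2
  -- commutators of (square times γ₄-element) with anything lie in S
  have comm_sq : ∀ c t b : G, c ∈ lowerCentralSeries G 1 → t ∈ lowerCentralSeries G 3 →
      ⁅c ^ 2 * t, b⁆ ∈ S := by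
    intro c t b hcL ht
    have hid : ⁅c ^ 2 * t, b⁆ = (c ^ 2 * ⁅t, b⁆ * (c ^ 2)⁻¹) * ⁅c ^ 2, b⁆ := by group
    rw [hid]
    refine S.mul_mem (hSn.conj_mem _ (hL4S (comm_mem_lcs ht b)) _) ?_
    have hid2 : ⁅c ^ 2, b⁆ = ⁅c, b⁆ ^ 2 * (⁅c, b⁆⁻¹ * ⁅⁅c, b⁆⁻¹, c⁆ * ⁅c, b⁆) := by
      rw [pow_two, pow_two]; group
    rw [hid2]
    have hcbL1 : (⁅c, b⁆ : G) ∈ lowerCentralSeries G 1 :=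
      lowerCentralSeries_antitone (by norm_num) (comm_mem_lcs hcL b)
    refine S.mul_mem (hPhiS (sq_mem_Phi hcbL1)) ?_
    have : ⁅c, b⁆⁻¹ * ⁅⁅c, b⁆⁻¹, c⁆ * ⁅c, b⁆
        = ⁅c, b⁆⁻¹ * ⁅⁅c, b⁆⁻¹, c⁆ * (⁅c, b⁆⁻¹)⁻¹ := by group
    rw [this]
    exact hSn.conj_mem _ (hPhiS (comm_mem_Phi (inv_mem hcbL1) hcL)) _
  -- the quotient by ⁅L1,L1⁆ ⊔ L4 where the Jacobi swap holds
  set N := ⁅lowerCentralSeries G 1, lowerCentralSeries G 1⁆ ⊔ lowerCentralSeries G 4 with hNdef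
  haveI hNnormal : N.Normal := by rw [hNdef]; infer_instance
  have hNS : N ≤ S := sup_le (le_trans le_sup_left hPhiS) hL4S
  set π := QuotientGroup.mk' N with hπ
  have hcommπ : ∀ {v w : G}, ⁅v,w⁆ ∈ N → Commute (π v) (π w) := by
    intro v w h
    rw [← commutatorElement_eq_one_iff_commute, ← map_commutatorElement]
    exact (QuotientGroup.eq_one_iff _).mpr h
  have hLLN : ∀ {v w : G}, v ∈ lowerCentralSeries G 1 → w ∈ lowerCentralSeries G 1 →
      Commute (π v) (π w) := fun hv hw =>
    hcommπ (Subgroup.mem_sup_left (Subgroup.commutator_mem_commutator hv hw))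
  have jac : ∀ b : G, π ⁅⁅⁅a₁,a₂⁆,a₃⁆, b⁆ = π ⁅⁅⁅a₁,a₂⁆,b⁆, a₃⁆ := by
    intro b
    have h2 : ∀ g, Commute ⁅⁅π ⁅a₁,a₂⁆, π b⁆, π a₃⁆ g := by
      intro g
      obtain ⟨g', rfl⟩ := QuotientGroup.mk'_surjective N g
      rw [← map_commutatorElement, ← map_commutatorElement]
      exact hcommπ (Subgroup.mem_sup_right
        (comm_mem_lcs (comm_mem_lcs (comm_mem_lcs hc2L1 b) a₃) g'))
    have h3x : Commute (π ⁅a₁,a₂⁆) ⁅π a₃, π b⁆ := by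
      rw [← map_commutatorElement]
      exact hLLN hc2L1 (comm_mem_lcs_one a₃ b)
    have h3w : Commute ⁅π ⁅a₁,a₂⁆, π b * π a₃⁆ ⁅π a₃, π b⁆ := by
      rw [← map_mul, ← map_commutatorElement, ← map_commutatorElement]
      exact hLLN (comm_mem_lcs_one _ _) (comm_mem_lcs_one _ _)
    have h4 : Commute ⁅π ⁅a₁,a₂⁆, π b⁆ ⁅π ⁅a₁,a₂⁆, π a₃⁆ := by
      rw [← map_commutatorElement, ← map_commutatorElement]
      exact hLLN (comm_mem_lcs_one _ _) (comm_mem_lcs_one _ _)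
    have := jacobi_aux (π ⁅a₁,a₂⁆) (π b) (π a₃) h2 h3x h3w h4
    simp only [← map_commutatorElement] at this
    exact this
  -- transfer: if the swapped commutator is in S then so is the original
  have transfer : ∀ b : G, ⁅⁅⁅a₁,a₂⁆,b⁆, a₃⁆ ∈ S → ⁅⁅⁅a₁,a₂⁆,a₃⁆, b⁆ ∈ S := by
    intro b hb
    have hone : π (⁅⁅⁅a₁,a₂⁆,a₃⁆, b⁆ * ⁅⁅⁅a₁,a₂⁆,b⁆, a₃⁆⁻¹) = 1 := by
      rw [map_mul, map_inv, jac b]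
      group
    have hmemN := (QuotientGroup.eq_one_iff _).mp hone
    have hsplit : (⁅⁅⁅a₁,a₂⁆,a₃⁆, b⁆ : G)
        = (⁅⁅⁅a₁,a₂⁆,a₃⁆, b⁆ * ⁅⁅⁅a₁,a₂⁆,b⁆, a₃⁆⁻¹) * ⁅⁅⁅a₁,a₂⁆,b⁆, a₃⁆ := by group
    rw [hsplit]
    exact S.mul_mem (hNS hmemN) hb
  -- the three base cases ⁅u, aᵢ⁆ ∈ S
  have hu1 : (⁅⁅⁅a₁,a₂⁆,a₃⁆, a₁⁆ : G) ∈ S := by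
    refine transfer a₁ ?_
    have hid : (⁅⁅a₁,a₂⁆,a₁⁆ : G) = ⁅a₁,a₂⁆ ^ 2 * ⁅a₂, a₁ ^ 2⁆ := by
      rw [pow_two, pow_two]; group
    rw [hid]
    exact comm_sq _ _ _ hc2L1 (comm_mem_lcs' ha₁ a₂)
  have hu2 : (⁅⁅⁅a₁,a₂⁆,a₃⁆, a₂⁆ : G) ∈ S := by
    refine transfer a₂ ?_
    have hid : (⁅⁅a₁,a₂⁆,a₂⁆ : G) =
        ⁅a₁,a₂⁆ ^ 2 * (⁅a₁,a₂⁆⁻¹ * ⁅a₁, a₂ ^ 2⁆⁻¹ * (⁅a₁,a₂⁆⁻¹)⁻¹) := by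
      rw [pow_two, pow_two]; group
    rw [hid]
    exact comm_sq _ _ _ hc2L1
      (((by infer_instance : (lowerCentralSeries G 3).Normal)).conj_mem _
        (inv_mem (comm_mem_lcs' ha₂ a₁)) _)
  have hu3 : (⁅⁅⁅a₁,a₂⁆,a₃⁆, a₃⁆ : G) ∈ S := by
    have hid : (⁅⁅⁅a₁,a₂⁆,a₃⁆, a₃⁆ : G) = ⁅⁅a₁,a₂⁆,a₃⁆ *
        ((⁅⁅a₁,a₂⁆,a₃⁆ ^ 2)⁻¹ * ⁅⁅a₁,a₂⁆, a₃ ^ 2⁆)⁻¹ * ⁅⁅a₁,a₂⁆,a₃⁆⁻¹ := by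
      rw [pow_two, pow_two]; group
    rw [hid]
    refine hSn.conj_mem _ (inv_mem (S.mul_mem (inv_mem (hPhiS (sq_mem_Phi huL1))) ?_)) _
    exact hPhiS (comm_mem_Phi hc2L1
      (lowerCentralSeries_antitone (by norm_num) ha₃))
  have hmemtop : ∀ x : G, x ∈ Subgroup.closure ({a₁, a₂, a₃} : Set G) := by
    intro x; rw [hgen]; trivial
  have hu_g : ∀ g : G, ⁅(⁅⁅a₁,a₂⁆,a₃⁆ : G), g⁆ ∈ S := by
    intro g
    refine Subgroup.closure_induction ?_ ?_ ?_ ?_ (hmemtop g)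
    · rintro w (rfl | rfl | rfl)
      exacts [hu1, hu2, hu3]
    · have : (⁅(⁅⁅a₁,a₂⁆,a₃⁆ : G), (1:G)⁆) = 1 := by group
      rw [this]; exact one_mem S
    · intro p q _ _ hp hq
      have : ⁅(⁅⁅a₁,a₂⁆,a₃⁆ : G), p * q⁆
          = ⁅(⁅⁅a₁,a₂⁆,a₃⁆ : G), p⁆ * (p * ⁅(⁅⁅a₁,a₂⁆,a₃⁆ : G), q⁆ * p⁻¹) := by group
      rw [this]; exact S.mul_mem hp (hSn.conj_mem _ hq p)
    · intro p _ hp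
      have : ⁅(⁅⁅a₁,a₂⁆,a₃⁆ : G), p⁻¹⁆ = p⁻¹ * ⁅(⁅⁅a₁,a₂⁆,a₃⁆ : G), p⁆⁻¹ * p := by group
      rw [this]
      simpa using hSn.conj_mem _ (inv_mem hp) p⁻¹
  have hu_d : ∀ d ∈ Subgroup.closure ({⁅⁅a₁,a₂⁆,a₃⁆} : Set G), ∀ g : G, ⁅d, g⁆ ∈ S := by
    intro d hd
    induction hd using Subgroup.closure_induction with
    | mem w hw => rw [Set.mem_singleton_iff] at hw; subst hw; exact hu_g
    | one =>
        intro g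
        have : (⁅(1:G), g⁆) = 1 := by group
        rw [this]; exact one_mem S
    | mul p q _ _ hp hq =>
        intro g
        have : ⁅p * q, g⁆ = (p * ⁅q, g⁆ * p⁻¹) * ⁅p, g⁆ := by group
        rw [this]; exact S.mul_mem (hSn.conj_mem _ (hq g) p) (hp g)
    | inv p _ hp =>
        intro g
        have : ⁅p⁻¹, g⁆ = p⁻¹ * ⁅p, g⁆⁻¹ * p := by group
        rw [this]
        simpa using hSn.conj_mem _ (inv_mem (hp g)) p⁻¹
  have hM : ∀ m ∈ Phi G ⊔ lowerCentralSeries G 3, ∀ g : G, ⁅m, g⁆ ∈ S := by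
    intro m hm g
    have : m ∈ (↑(Phi G ⊔ lowerCentralSeries G 3) : Set G) := hm
    rw [Subgroup.mul_normal] at this
    obtain ⟨f, hf, w, hw, rfl⟩ := this
    have hid : ⁅f * w, g⁆ = (f * ⁅w, g⁆ * f⁻¹) * ⁅f, g⁆ := by group
    rw [hid]
    exact S.mul_mem (hSn.conj_mem _ (hL4S (comm_mem_lcs hw g)) f)
      (hPhiS (normal_comm_mem hf g))
  have main : ∀ v ∈ lowerCentralSeries G 2, ∀ g : G, ⁅v, g⁆ ∈ S := by
    intro v hv g
    have hv2 : v ∈ Subgroup.closure ({⁅⁅a₁,a₂⁆,a₃⁆} : Set G) ⊔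
        (Phi G ⊔ lowerCentralSeries G 3) := by
      have := FB a₁ a₂ a₃ hgen ha₁ ha₂ ha₃ hc hv
      rwa [sup_assoc] at this
    rw [← SetLike.mem_coe, Subgroup.mul_normal] at hv2
    obtain ⟨d, hd, m, hm, rfl⟩ := hv2
    have hid : ⁅d * m, g⁆ = (d * ⁅m, g⁆ * d⁻¹) * ⁅d, g⁆ := by group
    rw [hid]
    exact S.mul_mem (hSn.conj_mem _ (hM m hm g) d) (hu_d d hd g)
  calc lowerCentralSeries G 3 = ⁅lowerCentralSeries G 2, ⊤⁆ := lowerCentralSeries_succ 2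
    _ ≤ S := Subgroup.commutator_le.mpr (fun x hx g _ => main x hx g)

end FC

section FD
variable (a₁ a₂ a₃ : G)

lemma FD (hnil : Group.IsNilpotent G)
    (hgen : Subgroup.closure {a₁, a₂, a₃} = ⊤)
    (ha₁ : a₁ ^ 2 ∈ lowerCentralSeries G 2)
    (ha₂ : a₂ ^ 2 ∈ lowerCentralSeries G 2)
    (ha₃ : a₃ ^ 2 ∈ lowerCentralSeries G 2)
    (hc : ⁅a₂, a₃⁆ ∈ lowerCentralSeries G 2) :
    lowerCentralSeries G 3 ≤ Phi G := by
  have step : ∀ n : ℕ, 3 ≤ n → lowerCentralSeries G n ≤ Phi G ⊔ lowerCentralSeries G (n+1) := by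
    intro n hn
    induction n with
    | zero => omega
    | succ m ih =>
        rcases Nat.lt_or_ge m 3 with hm | hm
        · interval_cases m
          · omega
          · omega
          · exact FC a₁ a₂ a₃ hgen ha₁ ha₂ ha₃ hc
        · have hprev := ih (by omega)
          set S := Phi G ⊔ lowerCentralSeries G (m + 1 + 1) with hSdef
          haveI hSn : S.Normal := by rw [hSdef]; infer_instance
          calc lowerCentralSeries G (m+1) = ⁅lowerCentralSeries G m, ⊤⁆ :=
                lowerCentralSeries_succ m
            _ ≤ S := by
              refine Subgroup.commutator_le.mpr (fun v hv g _ => ?_)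
              have hv' : v ∈ (↑(Phi G ⊔ lowerCentralSeries G (m+1)) : Set G) := hprev hv
              rw [Subgroup.mul_normal] at hv'
              obtain ⟨f, hf, w, hw, rfl⟩ := hv'
              have hid : ⁅f * w, g⁆ = (f * ⁅w, g⁆ * f⁻¹) * ⁅f, g⁆ := by group
              rw [hid]
              exact S.mul_mem (hSn.conj_mem _ (Subgroup.mem_sup_right (comm_mem_lcs hw g)) f)
                (Subgroup.mem_sup_left (normal_comm_mem hf g))
  have chain : ∀ m : ℕ, lowerCentralSeries G 3 ≤ Phi G ⊔ lowerCentralSeries G (3 + m) := by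
    intro m
    induction m with
    | zero => exact le_sup_right
    | succ k ih =>
        refine le_trans ih (sup_le le_sup_left ?_)
        refine le_trans (step (3+k) (by omega)) (sup_le le_sup_left ?_)
        have h31 : 3 + k + 1 = 3 + (k + 1) := by omega
        rw [h31]
        exact le_sup_right
  obtain ⟨k, hk⟩ := nilpotent_iff_lowerCentralSeries.mp hnil
  have := chain k
  have hbot : lowerCentralSeries G (3 + k) ≤ ⊥ := by
    rw [← hk]; exact lowerCentralSeries_antitone (by omega)
  calc lowerCentralSeries G 3 ≤ Phi G ⊔ lowerCentralSeries G (3+k) := this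
    _ ≤ Phi G ⊔ ⊥ := sup_le_sup_left hbot _
    _ = Phi G := sup_bot_eq _

lemma main_ineq (hnil : Group.IsNilpotent G)
    (hgen : Subgroup.closure {a₁, a₂, a₃} = ⊤)
    (ha₁ : a₁ ^ 2 ∈ lowerCentralSeries G 2)
    (ha₂ : a₂ ^ 2 ∈ lowerCentralSeries G 2)
    (ha₃ : a₃ ^ 2 ∈ lowerCentralSeries G 2)
    (hc : ⁅a₂, a₃⁆ ∈ lowerCentralSeries G 2) :
    lowerCentralSeries G 1 ≤
      Subgroup.closure {⁅a₁,a₂⁆, ⁅a₁,a₃⁆, ⁅⁅a₁,a₂⁆,a₃⁆} ⊔ Phi G := by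
  have hFD := FD a₁ a₂ a₃ hnil hgen ha₁ ha₂ ha₃ hc
  have hFB : lowerCentralSeries G 2 ≤
      Subgroup.closure {⁅⁅a₁,a₂⁆,a₃⁆} ⊔ Phi G := by
    refine le_trans (FB a₁ a₂ a₃ hgen ha₁ ha₂ ha₃ hc) ?_
    exact sup_le (sup_le le_sup_left le_sup_right) (le_trans hFD le_sup_right)
  have hFA := FA a₁ a₂ a₃ hgen hc
  refine le_trans hFA (sup_le ?_ ?_)
  · refine le_trans (Subgroup.closure_mono ?_) le_sup_left
    intro x hx
    rcases hx with rfl | rfl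
    · exact Set.mem_insert _ _
    · exact Set.mem_insert_of_mem _ (Set.mem_insert _ _)
  · refine le_trans hFB (sup_le ?_ le_sup_right)
    refine le_trans (Subgroup.closure_mono ?_) le_sup_left
    intro x hx
    rw [Set.mem_singleton_iff] at hx
    subst hx
    exact Set.mem_insert_of_mem _ (Set.mem_insert_of_mem _ (Set.mem_singleton _))

end FD

section Endgame

lemma endgame {P : Type*} [Group P] [Finite P] (hP : IsPGroup 2 P) (T : Subgroup P)
    (hcov : ∀ M : Subgroup P, M.Normal → (∀ y : P, y ^ 2 ∈ M) → (∀ y z : P, ⁅y, z⁆ ∈ M) →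
      T ≤ M → ∀ x : P, x ∈ M) : T = ⊤ := by
  rcases (inferInstance : IsCoatomic (Subgroup P)).eq_top_or_exists_le_coatom T with
    h | ⟨M, hM, hTM⟩
  · exact h
  haveI : Fact (Nat.Prime 2) := ⟨Nat.prime_two⟩
  haveI hnil : Group.IsNilpotent P := hP.isNilpotent
  have hMn : M.Normal :=
    Subgroup.NormalizerCondition.normal_of_coatom _ normalizerCondition_of_isNilpotent hM
  have hsq : ∀ y : P, y ^ 2 ∈ M := by
    intro y
    by_cases hy : y ∈ M
    · exact pow_mem hy 2
    rcases eq_or_ne (M ⊔ Subgroup.zpowers (y ^ 2)) ⊤ with htop | hne2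
    · exfalso
      apply hy
      have hytop : y ∈ (↑(M ⊔ Subgroup.zpowers (y ^ 2)) : Set P) := by
        rw [htop]; trivial
      rw [Subgroup.normal_mul] at hytop
      obtain ⟨m, hm, w, hw, hmw⟩ := hytop
      obtain ⟨k, hk⟩ := Subgroup.mem_zpowers_iff.mp hw
      obtain ⟨n, hn⟩ := hP y
      have hmw' : y = m * w := by simpa using hmw.symm
      have h1 : w = y ^ ((2:ℤ) * k) := by
        rw [← hk, ← zpow_natCast y 2, ← zpow_mul]
        norm_num
      have hmy : y ^ ((1:ℤ) - 2 * k) = m := by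
        rw [zpow_sub, zpow_one, ← h1, hmw']
        group
      have hone : y ^ ((2:ℤ) ^ n) = 1 := by
        rw [show ((2:ℤ) ^ n) = ((2 ^ n : ℕ) : ℤ) by push_cast; ring, zpow_natCast]
        exact hn
      have hcop : IsCoprime ((1:ℤ) - 2 * k) ((2:ℤ) ^ n) :=
        IsCoprime.pow_right (⟨1, k, by ring⟩ : IsCoprime ((1:ℤ) - 2 * k) 2)
      obtain ⟨α, β, hαβ⟩ := hcop
      have hy' : y = (y ^ ((1:ℤ) - 2 * k)) ^ α * (y ^ ((2:ℤ) ^ n)) ^ β := by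
        calc y = y ^ (α * ((1:ℤ) - 2 * k) + β * (2:ℤ) ^ n) := by rw [hαβ, zpow_one]
          _ = y ^ (α * ((1:ℤ) - 2 * k)) * y ^ (β * (2:ℤ) ^ n) := zpow_add y _ _
          _ = (y ^ ((1:ℤ) - 2 * k)) ^ α * (y ^ ((2:ℤ) ^ n)) ^ β := by
              rw [mul_comm α, mul_comm β, zpow_mul, zpow_mul]
      rw [hy', hmy, hone]
      exact mul_mem (Subgroup.zpow_mem M hm α) (by rw [one_zpow]; exact one_mem M)
    · have heq : M ⊔ Subgroup.zpowers (y ^ 2) = M := by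
        by_contra hne3
        exact hne2 (hM.2 _ (lt_of_le_of_ne le_sup_left (Ne.symm hne3)))
      have hmem : y ^ 2 ∈ M ⊔ Subgroup.zpowers (y ^ 2) :=
        Subgroup.mem_sup_right (Subgroup.mem_zpowers _)
      rwa [heq] at hmem
  have hcomm : ∀ y z : P, ⁅y, z⁆ ∈ M := by
    intro y z
    by_cases hy : y ∈ M
    · have hid : ⁅y, z⁆ = y * (z * y⁻¹ * z⁻¹) := by group
      rw [hid]; exact mul_mem hy (hMn.conj_mem _ (inv_mem hy) z)
    by_cases hz : z ∈ M
    · have hid : ⁅y, z⁆ = (y * z * y⁻¹) * z⁻¹ := by group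
      rw [hid]; exact mul_mem (hMn.conj_mem _ hz y) (inv_mem hz)
    have htop : M ⊔ Subgroup.zpowers y = ⊤ := by
      refine hM.2 _ (lt_of_le_of_ne le_sup_left fun h => hy ?_)
      rw [h]
      exact Subgroup.mem_sup_right (Subgroup.mem_zpowers y)
    have hz' : z ∈ (↑(M ⊔ Subgroup.zpowers y) : Set P) := by rw [htop]; trivial
    rw [Subgroup.normal_mul] at hz'
    obtain ⟨m, hm, w, hw, hmw⟩ := hz'
    obtain ⟨k, hk⟩ := Subgroup.mem_zpowers_iff.mp hw
    have hmw' : z = m * w := by simpa using hmw.symm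
    have hyk : ⁅y, w⁆ = 1 := by
      rw [← hk]
      exact commutatorElement_eq_one_iff_commute.mpr ((Commute.refl y).zpow_right k)
    have hid : ⁅y, z⁆ = ⁅y, m⁆ * (m * ⁅y, w⁆ * m⁻¹) := by rw [hmw']; group
    rw [hid, hyk]
    have hid2 : ⁅y, m⁆ * (m * 1 * m⁻¹) = (y * m * y⁻¹) * m⁻¹ := by group
    rw [hid2]
    exact mul_mem (hMn.conj_mem _ hm y) (inv_mem hm)
  exact absurd (eq_top_iff.mpr fun x _ => hcov M hMn hsq hcomm hTM x) hM.1

end Endgame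

end RankAux

/-- If `G/G₃` is the group 32.033, then the commutator subgroup of `G` has rank at most 3. -/
theorem rank_derived_le_three {G : Type*} [Group G] [Finite G]
    (hG : IsPGroup 2 G) (a₁ a₂ a₃ : G)
    (hgen : Subgroup.closure {a₁, a₂, a₃} = ⊤)
    (h1 : Nonempty ((G ⧸ (⊤ : Subgroup G).lowerCentralSeries 1) ≃*
      Multiplicative (ZMod 2 × ZMod 2 × ZMod 2)))
    (h2 : Nonempty (((⊤ : Subgroup G).lowerCentralSeries 1 ⧸
      ((⊤ : Subgroup G).lowerCentralSeries 2).subgroupOf ((⊤ : Subgroup G).lowerCentralSeries 1)) ≃*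
      Multiplicative (ZMod 2 × ZMod 2)))
    (ha₁ : a₁ ^ 2 ∈ (⊤ : Subgroup G).lowerCentralSeries 2)
    (ha₂ : a₂ ^ 2 ∈ (⊤ : Subgroup G).lowerCentralSeries 2)
    (ha₃ : a₃ ^ 2 ∈ (⊤ : Subgroup G).lowerCentralSeries 2)
    (hc : commu a₂ a₃ ∈ (⊤ : Subgroup G).lowerCentralSeries 2) :
    ∃ s : Finset ((⊤ : Subgroup G).lowerCentralSeries 1 : Subgroup G), s.card ≤ 3 ∧
      Subgroup.closure (s : Set ((⊤ : Subgroup G).lowerCentralSeries 1 : Subgroup G)) = ⊤ := by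
  classical
  haveI : Fact (Nat.Prime 2) := ⟨Nat.prime_two⟩
  haveI hnil : Group.IsNilpotent G := hG.isNilpotent
  have hc' : (⁅a₂, a₃⁆ : G) ∈ RankAux.lowerCentralSeries G 2 := by
    have hid : (⁅a₂, a₃⁆ : G) = (a₂ * a₃) * commu a₂ a₃ * (a₂ * a₃)⁻¹ := by
      unfold commu; group
    rw [hid]
    exact ((by infer_instance : (RankAux.lowerCentralSeries G 2).Normal)).conj_mem _ hc _
  have hc2P : (⁅a₁, a₂⁆ : G) ∈ RankAux.lowerCentralSeries G 1 := RankAux.comm_mem_lcs_one _ _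
  have hc3P : (⁅a₁, a₃⁆ : G) ∈ RankAux.lowerCentralSeries G 1 := RankAux.comm_mem_lcs_one _ _
  have huP : (⁅⁅a₁, a₂⁆, a₃⁆ : G) ∈ RankAux.lowerCentralSeries G 1 :=
    RankAux.lowerCentralSeries_antitone (by norm_num)
      (RankAux.comm_mem_lcs (RankAux.comm_mem_lcs_one a₁ a₂) a₃)
  set P := RankAux.lowerCentralSeries G 1 with hPdef
  let d₂ : P := ⟨_, hc2P⟩
  let d₃ : P := ⟨_, hc3P⟩
  let du : P := ⟨_, huP⟩
  refine ⟨{d₂, d₃, du}, ?_, ?_⟩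
  · refine le_trans (Finset.card_insert_le _ _) ?_
    have h' := Finset.card_insert_le d₃ ({du} : Finset P)
    simp only [Finset.card_singleton] at h'
    omega
  · have hcoe : ((({d₂, d₃, du} : Finset P) : Set P)) = {d₂, d₃, du} := by
      simp
    rw [hcoe]
    refine RankAux.endgame (hG.to_subgroup P) _ ?_
    intro M hMn hsqM hcommM hTM x
    set M' := Subgroup.map P.subtype M with hM'def
    have hd₂T : d₂ ∈ Subgroup.closure ({d₂, d₃, du} : Set P) :=
      Subgroup.subset_closure (Set.mem_insert _ _)
    have hd₃T : d₃ ∈ Subgroup.closure ({d₂, d₃, du} : Set P) :=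
      Subgroup.subset_closure (Set.mem_insert_of_mem _ (Set.mem_insert _ _))
    have hduT : du ∈ Subgroup.closure ({d₂, d₃, du} : Set P) :=
      Subgroup.subset_closure (Set.mem_insert_of_mem _ (Set.mem_insert_of_mem _ rfl))
    have hM'1 : Subgroup.closure {⁅a₁,a₂⁆, ⁅a₁,a₃⁆, ⁅⁅a₁,a₂⁆,a₃⁆} ≤ M' := by
      rw [Subgroup.closure_le]
      rintro v (rfl | rfl | rfl)
      · exact ⟨d₂, hTM hd₂T, rfl⟩
      · exact ⟨d₃, hTM hd₃T, rfl⟩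
      · exact ⟨du, hTM hduT, rfl⟩
    have hM'2 : RankAux.Phi G ≤ M' := by
      refine sup_le ?_ ?_
      · refine Subgroup.commutator_le.mpr (fun p hp q hq => ?_)
        exact ⟨⁅(⟨p, hp⟩ : P), (⟨q, hq⟩ : P)⁆, hcommM _ _, rfl⟩
      · rw [RankAux.Sq, Subgroup.closure_le]
        rintro v ⟨w, hw, rfl⟩
        exact ⟨(⟨w, hw⟩ : P) ^ 2, hsqM _, rfl⟩
    have hxM' : (↑x : G) ∈ M' := by
      have hx1 := RankAux.main_ineq a₁ a₂ a₃ hnil hgen ha₁ ha₂ ha₃ hc' x.2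
      exact (sup_le hM'1 hM'2) hx1
    obtain ⟨y, hyM, hyx⟩ := hxM'
    have hyx' : y = x := Subtype.ext hyx
    rwa [← hyx']
end

section
/- Let G be a finite 2-group with G/G' elementary abelian. Then for every j, the quotient G_j/G_{j+1} of consecutive terms of the lower central series is elementary abelian (possibly trivial). -/
open scoped commutatorElement

private lemma lcs_sq_mem {G : Type*} [Group G]
    (hexp : ∀ x : Abelianization G, x ^ 2 = 1) :
    ∀ j : ℕ, ∀ x ∈ (⊤ : Subgroup G).lowerCentralSeries j, x ^ 2 ∈ (⊤ : Subgroup G).lowerCentralSeries (j + 1) := by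
  intro j
  induction j with
  | zero =>
    intro x _
    have h : Abelianization.of (x ^ 2) = 1 := by
      rw [map_pow]; exact hexp _
    exact (QuotientGroup.eq_one_iff (x ^ 2)).mp h
  | succ j ih =>
    -- work in the quotient Q = G / G_{j+2}
    set N := (⊤ : Subgroup G).lowerCentralSeries (j + 2) with hN
    let π := QuotientGroup.mk' N
    -- images of elements of G_{j+1} are central in Q
    have central : ∀ u ∈ (⊤ : Subgroup G).lowerCentralSeries (j + 1), π u ∈ Subgroup.center (G ⧸ N) := by
      intro u hu
      rw [Subgroup.mem_center_iff]
      intro z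
      obtain ⟨w, rfl⟩ := QuotientGroup.mk'_surjective N z
      rw [← map_mul, ← map_mul]
      apply (QuotientGroup.mk'_eq_mk' N).mpr
      refine ⟨⁅u⁻¹, w⁻¹⁆, ?_, by group⟩
      have : ⁅u⁻¹, w⁻¹⁆ ∈ ⁅(⊤ : Subgroup G).lowerCentralSeries (j + 1), (⊤ : Subgroup G)⁆ :=
        Subgroup.commutator_mem_commutator (inv_mem hu) (Subgroup.mem_top _)
      exact this
    -- the subgroup of central square-one elements of Q
    let K : Subgroup (G ⧸ N) :=
      { carrier := {y | y ∈ Subgroup.center (G ⧸ N) ∧ y ^ 2 = 1}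
        one_mem' := ⟨Subgroup.one_mem _, one_pow 2⟩
        mul_mem' := by
          rintro a b ⟨ha, ha2⟩ ⟨hb, hb2⟩
          refine ⟨mul_mem ha hb, ?_⟩
          have hc : Commute a b := (Subgroup.mem_center_iff.mp ha b).symm
          rw [hc.mul_pow, ha2, hb2, one_mul]
        inv_mem' := by
          rintro a ⟨ha, ha2⟩
          exact ⟨inv_mem ha, by rw [inv_pow, ha2, inv_one]⟩ }
    -- generators of G_{j+1} land in K
    have hgen : (⊤ : Subgroup G).lowerCentralSeries (j + 1) ≤ Subgroup.comap π K := by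
      show ⁅(⊤ : Subgroup G).lowerCentralSeries j, (⊤ : Subgroup G)⁆ ≤ Subgroup.comap π K
      rw [Subgroup.commutator_le]
      intro h hh g _
      have hcomm : ⁅h, g⁆ ∈ (⊤ : Subgroup G).lowerCentralSeries (j + 1) :=
        Subgroup.commutator_mem_commutator hh (Subgroup.mem_top g)
      have hcent : π ⁅h, g⁆ ∈ Subgroup.center (G ⧸ N) := central _ hcomm
      refine Subgroup.mem_comap.mpr ⟨hcent, ?_⟩
      -- square of the commutator
      have hA : π h * π ⁅h, g⁆ = π ⁅h, g⁆ * π h :=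
        Subgroup.mem_center_iff.mp hcent (π h)
      have hid : π ⁅h * h, g⁆ = π h * π ⁅h, g⁆ * (π h)⁻¹ * π ⁅h, g⁆ := by
        simp only [map_commutatorElement, map_mul]
        group
      have hsq2 : (π ⁅h, g⁆) ^ 2 = π ⁅h * h, g⁆ := by
        rw [hid, hA, mul_inv_cancel_right, pow_two]
      rw [hsq2]
      have hsq : h * h ∈ (⊤ : Subgroup G).lowerCentralSeries (j + 1) := by
        have := ih h hh; rwa [pow_two] at this
      have : ⁅h * h, g⁆ ∈ N :=
        Subgroup.commutator_mem_commutator hsq (Subgroup.mem_top g)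
      exact (QuotientGroup.eq_one_iff _).mpr this
    -- conclude
    intro x hx
    have hxK := Subgroup.mem_comap.mp (hgen hx)
    have : π (x ^ 2) = 1 := by rw [map_pow]; exact hxK.2
    exact (QuotientGroup.eq_one_iff _).mp this

theorem lcs_quotients_elementary_abelian {G : Type*} [Group G] [Finite G]
    (hG : IsPGroup 2 G)
    (hexp : ∀ x : Abelianization G, x ^ 2 = 1) :
    ∀ j : ℕ,
      (∀ x y : (⊤ : Subgroup G).lowerCentralSeries j ⧸
          ((⊤ : Subgroup G).lowerCentralSeries (j + 1)).subgroupOf ((⊤ : Subgroup G).lowerCentralSeries j),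
        x * y = y * x) ∧
      (∀ x : (⊤ : Subgroup G).lowerCentralSeries j ⧸
          ((⊤ : Subgroup G).lowerCentralSeries (j + 1)).subgroupOf ((⊤ : Subgroup G).lowerCentralSeries j),
        x ^ 2 = 1) := by
  intro j
  constructor
  · intro x y
    induction x using QuotientGroup.induction_on with
    | H a =>
    induction y using QuotientGroup.induction_on with
    | H b =>
    rw [← QuotientGroup.mk_mul, ← QuotientGroup.mk_mul, QuotientGroup.eq]
    rw [Subgroup.mem_subgroupOf]
    have key : (((a * b)⁻¹ * (b * a) : (⊤ : Subgroup G).lowerCentralSeries j) : G) =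
        ⁅(b : G)⁻¹, (a : G)⁻¹⁆ := by
      push_cast
      group
    rw [key]
    have : ⁅(b : G)⁻¹, (a : G)⁻¹⁆ ∈ ⁅(⊤ : Subgroup G).lowerCentralSeries j, (⊤ : Subgroup G)⁆ :=
      Subgroup.commutator_mem_commutator (inv_mem b.2) (Subgroup.mem_top _)
    exact this
  · intro x
    induction x using QuotientGroup.induction_on with
    | H a =>
    rw [← QuotientGroup.mk_pow]
    rw [QuotientGroup.eq_one_iff]
    rw [Subgroup.mem_subgroupOf]
    have : ((a ^ 2 : (⊤ : Subgroup G).lowerCentralSeries j) : G) = (a : G) ^ 2 := by push_cast; rfl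
    rw [this]
    exact lcs_sq_mem hexp j a a.2
end
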